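/- Every cycle spider is strongly antimagic, where a cycle spider is obtained from a spider by replacing each leg (path from the center to a leaf) by a cycle through the center of the same length plus one; equivalently, a cycle spider is a connected graph consisting of at least three cycles that pairwise intersect in exactly one common vertex. -/

import Mathlib

open Finset

open scoped Classical

noncomputable section

variable {V : Type*} [Fintype V] [DecidableEq V]

/-- The finset of edges of a simple graph on a finite vertex type. -/
def edges (G : SimpleGraph V) : Finset (Sym2 V) :=
  Finset.univ.filter (fun e => e ∈ G.edgeSet)

/-- The vertex sum `φ_f(v)`: the sum of the labels of the edges incident to `v`. -/
def phi (G : SimpleGraph V) (f : Sym2 V → ℕ) (v : V) : ℕ :=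
  ∑ e ∈ (edges G).filter (fun e => v ∈ e), f e

/-- The degree of a vertex: the number of edges incident to it. -/
def deg (G : SimpleGraph V) (v : V) : ℕ :=
  ((edges G).filter (fun e => v ∈ e)).card

/-- `f` is a strongly antimagic labeling of `G`: a bijection from the edge set onto
`{1, …, m}` with pairwise distinct vertex sums, such that larger degree forces a
larger vertex sum. -/
def IsStronglyAntimagicLabeling (G : SimpleGraph V) (f : Sym2 V → ℕ) : Prop :=
  Set.BijOn f (edges G : Set (Sym2 V)) (Set.Icc 1 (edges G).card) ∧
  (∀ u v : V, u ≠ v → phi G f u ≠ phi G f v) ∧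
  (∀ u v : V, deg G v < deg G u → phi G f v < phi G f u)

/-- A graph is strongly antimagic if it admits a strongly antimagic labeling. -/
def IsStronglyAntimagic (G : SimpleGraph V) : Prop :=
  ∃ f : Sym2 V → ℕ, IsStronglyAntimagicLabeling G f

/-- A cycle spider: `r` cycles, the `i`-th of length `ℓ i`, all passing through the
common center `none` and otherwise disjoint. -/
def cycleSpider (r : ℕ) (l : Fin r → ℕ) :
    SimpleGraph (Option (Σ i : Fin r, Fin (l i - 1))) :=
  SimpleGraph.fromEdgeSet (
    {e | ∃ (i : Fin r) (j : Fin (l i - 1)), ((j : ℕ) = 0 ∨ (j : ℕ) = l i - 2) ∧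
        e = s(none, some ⟨i, j⟩)}
    ∪ {e | ∃ (i : Fin r) (j j' : Fin (l i - 1)), (j' : ℕ) = (j : ℕ) + 1 ∧
        e = s(some ⟨i, j⟩, some ⟨i, j'⟩)})

/-! ### Auxiliary development -/

/-! ### Auxiliary development -/

namespace CycleSpiderAux

variable {r : ℕ} {l : Fin r → ℕ}

/-- Vertex type of the cycle spider. -/
abbrev VV (r : ℕ) (l : Fin r → ℕ) := Option (Σ i : Fin r, Fin (l i - 1))

/-- The `t`-th edge of the `i`-th cycle, `t : Fin (l i)`. -/
def ed (hl : ∀ i, 3 ≤ l i) (x : Σ i : Fin r, Fin (l i)) : Sym2 (VV r l) :=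
  if h0 : (x.2 : ℕ) = 0 then
    s(none, some ⟨x.1, ⟨0, by have := hl x.1; omega⟩⟩)
  else if hL : (x.2 : ℕ) = l x.1 - 1 then
    s(none, some ⟨x.1, ⟨l x.1 - 2, by have := hl x.1; omega⟩⟩)
  else
    s(some ⟨x.1, ⟨(x.2 : ℕ) - 1, by have := hl x.1; have := x.2.2; omega⟩⟩,
      some ⟨x.1, ⟨(x.2 : ℕ), by have := hl x.1; have := x.2.2; omega⟩⟩)

lemma some_eq_some {i i' : Fin r} {j : Fin (l i - 1)} {j' : Fin (l i' - 1)} :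
    (some ⟨i, j⟩ : VV r l) = some ⟨i', j'⟩ ↔ i = i' ∧ (j : ℕ) = (j' : ℕ) := by
  rw [Option.some.injEq, Sigma.mk.inj_iff]
  constructor
  · rintro ⟨rfl, h⟩
    exact ⟨rfl, by rw [eq_of_heq h]⟩
  · rintro ⟨rfl, h⟩
    exact ⟨rfl, heq_of_eq (Fin.ext h)⟩

lemma sig_ext {x x' : Σ i : Fin r, Fin (l i)} (h1 : x.1 = x'.1)
    (h2 : (x.2 : ℕ) = (x'.2 : ℕ)) : x = x' := by
  obtain ⟨i, t⟩ := x; obtain ⟨i', t'⟩ := x'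
  cases h1
  exact congrArg _ (Fin.ext h2)

lemma mem_ed_none (hl : ∀ i, 3 ≤ l i) (x : Σ i : Fin r, Fin (l i)) :
    (none : VV r l) ∈ ed hl x ↔ (x.2 : ℕ) = 0 ∨ (x.2 : ℕ) = l x.1 - 1 := by
  unfold ed
  split_ifs with h0 hL
  · simp [h0]
  · simp [h0, hL]
  · simp [h0, hL, Sym2.mem_iff]

lemma mem_ed_some (hl : ∀ i, 3 ≤ l i) (x : Σ i : Fin r, Fin (l i))
    (i : Fin r) (j : Fin (l i - 1)) :
    (some ⟨i, j⟩ : VV r l) ∈ ed hl x ↔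
      x.1 = i ∧ ((x.2 : ℕ) = (j : ℕ) ∨ (x.2 : ℕ) = (j : ℕ) + 1) := by
  have hj := j.2
  have h3 := hl i
  have h3' := hl x.1
  have hx := x.2.2
  unfold ed
  split_ifs with h0 hL
  · simp only [Sym2.mem_iff, some_eq_some]
    constructor
    · rintro (h | ⟨rfl, h⟩)
      · exact absurd h (by simp)
      · exact ⟨rfl, by omega⟩
    · rintro ⟨rfl, h⟩
      exact Or.inr ⟨rfl, by omega⟩
  · simp only [Sym2.mem_iff, some_eq_some]
    constructor
    · rintro (h | ⟨rfl, h⟩)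
      · exact absurd h (by simp)
      · exact ⟨rfl, by omega⟩
    · rintro ⟨rfl, h⟩
      exact Or.inr ⟨rfl, by omega⟩
  · simp only [Sym2.mem_iff, some_eq_some]
    constructor
    · rintro (⟨rfl, h⟩ | ⟨rfl, h⟩)
      · exact ⟨rfl, by omega⟩
      · exact ⟨rfl, by omega⟩
    · rintro ⟨rfl, h⟩
      rcases h with h | h
      · exact Or.inr ⟨rfl, by omega⟩
      · exact Or.inl ⟨rfl, by omega⟩

lemma ed_injective (hl : ∀ i, 3 ≤ l i) : Function.Injective (ed (l := l) hl) := by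
  rintro ⟨i, t⟩ ⟨i', t'⟩ h
  have hx := t.2
  have hx' := t'.2
  have h3 := hl i
  have h3' := hl i'
  unfold ed at h
  dsimp only at h
  split_ifs at h with h0 hL h0' h0' hL' h0' hL' <;>
      simp only [Sym2.eq_iff, some_eq_some, reduceCtorEq,
        false_and, and_false, false_or, or_false, true_and, and_true] at h
  · exact sig_ext h (show (t : ℕ) = (t' : ℕ) by omega)
  · exact absurd h.2 (by omega)
  · exact absurd h.2 (by omega)
  · obtain ⟨rfl, -⟩ := h; exact sig_ext rfl (show (t : ℕ) = (t' : ℕ) by omega)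
  · rcases h with ⟨⟨rfl, -⟩, -, h2⟩ | ⟨⟨rfl, h1⟩, -, h2⟩
    · exact sig_ext rfl (show (t : ℕ) = (t' : ℕ) by omega)
    · exact sig_ext rfl (show (t : ℕ) = (t' : ℕ) by omega)

lemma edgeSet_eq (hl : ∀ i, 3 ≤ l i) :
    (cycleSpider r l).edgeSet = Set.range (ed hl) := by
  rw [cycleSpider, SimpleGraph.edgeSet_fromEdgeSet]
  ext e
  constructor
  · rintro ⟨h, -⟩
    rcases h with ⟨i, j, hj, rfl⟩ | ⟨i, j, j', hj', rfl⟩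
    · have h3 := hl i
      have hjlt := j.2
      rcases hj with hj | hj
      · refine ⟨⟨i, ⟨0, by omega⟩⟩, ?_⟩
        unfold ed
        rw [dif_pos rfl]
        congr 2
        exact Option.some.inj (some_eq_some.mpr ⟨rfl, by simp [hj]⟩)
      · refine ⟨⟨i, ⟨l i - 1, by omega⟩⟩, ?_⟩
        unfold ed
        rw [dif_neg (by simp; omega), dif_pos rfl]
        congr 2
        exact Option.some.inj (some_eq_some.mpr ⟨rfl, by simp [hj]⟩)
    · have h3 := hl i
      have hjlt := j.2
      have hj'lt := j'.2
      refine ⟨⟨i, ⟨(j : ℕ) + 1, by omega⟩⟩, ?_⟩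
      unfold ed
      rw [dif_neg (show ¬((j : ℕ) + 1 = 0) by omega),
        dif_neg (show ¬((j : ℕ) + 1 = l i - 1) by omega)]
      rw [Sym2.eq_iff]
      left
      constructor
      · exact some_eq_some.mpr ⟨rfl, by simp⟩
      · exact some_eq_some.mpr ⟨rfl, by simp [hj']⟩
  · rintro ⟨x, rfl⟩
    obtain ⟨i, t⟩ := x
    have h3 := hl i
    have ht := t.2
    constructor
    · unfold ed
      dsimp only
      split_ifs with h0 hL
      · exact Or.inl ⟨i, ⟨0, by omega⟩, Or.inl rfl, rfl⟩
      · exact Or.inl ⟨i, ⟨l i - 2, by omega⟩, Or.inr rfl, rfl⟩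
      · refine Or.inr ⟨i, ⟨(t : ℕ) - 1, by omega⟩, ⟨(t : ℕ), by omega⟩, show (t : ℕ) = (t : ℕ) - 1 + 1 from by omega, rfl⟩
    · unfold ed
      dsimp only
      split_ifs with h0 hL
      · simp
      · simp
      · intro hd
        rw [Sym2.mem_diagSet, Sym2.mk_isDiag_iff, some_eq_some] at hd
        have hv : (t : ℕ) - 1 = (t : ℕ) := hd.2
        omega

lemma edges_eq (hl : ∀ i, 3 ≤ l i) :
    edges (cycleSpider r l) = Finset.image (ed hl) Finset.univ := by
  ext e
  simp [edges, edgeSet_eq hl, Set.mem_range, eq_comm]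

section Labels

variable (l) (σ : Equiv.Perm (Fin r))

/-- length of the `p`-th block -/
def LL (p : Fin r) : ℕ := l (σ.symm p)

/-- start of the `p`-th block -/
def bb (p : Fin r) : ℕ := 1 + ∑ q ∈ Finset.Iio p, LL l σ q

/-- start of the block of cycle `i` -/
def aa (i : Fin r) : ℕ := bb l σ (σ i)

/-- the label of edge `x` -/
def lab (x : Σ i : Fin r, Fin (l i)) : ℕ := aa l σ x.1 + (x.2 : ℕ)

end Labels

/-- the labeling on `Sym2` -/
def ff (hl : ∀ i, 3 ≤ l i) (σ : Equiv.Perm (Fin r)) (e : Sym2 (VV r l)) : ℕ :=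
  if h : ∃ x, ed hl x = e then lab l σ h.choose else 0

variable (σ : Equiv.Perm (Fin r))

lemma ff_ed (hl : ∀ i, 3 ≤ l i) (x : Σ i : Fin r, Fin (l i)) :
    ff hl σ (ed hl x) = lab l σ x := by
  have h : ∃ y, ed hl y = ed hl x := ⟨x, rfl⟩
  rw [ff, dif_pos h, ed_injective hl h.choose_spec]

lemma LL_sigma (hl : ∀ i, 3 ≤ l i) (i : Fin r) : LL l σ (σ i) = l i := by
  rw [LL, Equiv.symm_apply_apply]

lemma sum_LL : ∑ p, LL l σ p = ∑ i, l i := Equiv.sum_comp σ.symm l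

lemma bb_add (p : Fin r) : bb l σ p + LL l σ p = 1 + ∑ q ∈ Finset.Iic p, LL l σ q := by
  rw [bb, ← Finset.Iio_insert, Finset.sum_insert (by simp)]
  ring

lemma bb_le {p p' : Fin r} (h : p < p') : bb l σ p + LL l σ p ≤ bb l σ p' := by
  rw [bb_add, bb]
  have : Finset.Iic p ⊆ Finset.Iio p' := fun q hq => by
    simp only [Finset.mem_Iic] at hq
    simp only [Finset.mem_Iio]
    exact lt_of_le_of_lt hq h
  exact Nat.add_le_add_left (Finset.sum_le_sum_of_subset this) 1

lemma bb_le_m (p : Fin r) : bb l σ p + LL l σ p ≤ 1 + ∑ i, l i := by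
  rw [bb_add, ← sum_LL (l := l) σ]
  exact Nat.add_le_add_left (Finset.sum_le_sum_of_subset (Finset.subset_univ _)) 1

lemma bb_last (hr : 0 < r) : bb l σ ⟨r - 1, by omega⟩ + LL l σ ⟨r - 1, by omega⟩
    = 1 + ∑ i, l i := by
  rw [bb_add, ← sum_LL (l := l) σ]
  congr 1
  apply Finset.sum_congr _ (fun _ _ => rfl)
  ext q
  simp only [Finset.mem_Iic, Finset.mem_univ, iff_true]
  exact Fin.le_def.mpr (show (q : ℕ) ≤ r - 1 from by have := q.2; omega)

lemma bb_zero (hr : 0 < r) : bb l σ ⟨0, hr⟩ = 1 := by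
  rw [bb]
  have : Finset.Iio (⟨0, hr⟩ : Fin r) = ∅ := by
    ext q
    simp [Fin.lt_def]
  simp [this]

lemma lab_pos (x : Σ i : Fin r, Fin (l i)) : 1 ≤ lab l σ x := by
  rw [lab, aa, bb]; omega

lemma lab_lt (hl : ∀ i, 3 ≤ l i) {x x' : Σ i : Fin r, Fin (l i)}
    (h : σ x.1 < σ x'.1) : lab l σ x < lab l σ x' := by
  have h1 : (x.2 : ℕ) < LL l σ (σ x.1) := by rw [LL_sigma σ hl]; exact x.2.2
  have h2 := bb_le (l := l) σ h
  rw [lab, lab, aa, aa]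
  omega

lemma lab_le_m (hl : ∀ i, 3 ≤ l i) (x : Σ i : Fin r, Fin (l i)) :
    lab l σ x ≤ ∑ i, l i := by
  have h1 : (x.2 : ℕ) < LL l σ (σ x.1) := by rw [LL_sigma σ hl]; exact x.2.2
  have h2 := bb_le_m (l := l) σ (σ x.1)
  rw [lab, aa]
  omega

lemma lab_injective (hl : ∀ i, 3 ≤ l i) : Function.Injective (lab l σ) := by
  rintro ⟨i, t⟩ ⟨i', t'⟩ h
  rcases lt_trichotomy (σ i) (σ i') with hlt | heq | hlt
  · exact absurd h (Nat.ne_of_lt (lab_lt σ hl hlt))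
  · have h1 : i = i' := σ.injective heq
    subst h1
    refine sig_ext rfl ?_
    simp only [lab, aa] at h
    show (t : ℕ) = (t' : ℕ)
    omega
  · exact absurd h.symm (Nat.ne_of_lt (lab_lt σ hl hlt))

lemma image_lab (hl : ∀ i, 3 ≤ l i) :
    Finset.image (lab l σ) Finset.univ = Finset.Icc 1 (∑ i, l i) := by
  apply Finset.eq_of_subset_of_card_le
  · intro y hy
    simp only [Finset.mem_image] at hy
    obtain ⟨x, -, rfl⟩ := hy
    exact Finset.mem_Icc.mpr ⟨lab_pos (l := l) σ x, lab_le_m σ hl x⟩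
  · rw [Finset.card_image_of_injective _ (lab_injective σ hl), Nat.card_Icc]
    simp [Fintype.card_sigma]

lemma sig_eq_iff {x x' : Σ i : Fin r, Fin (l i)} :
    x = x' ↔ x.1 = x'.1 ∧ (x.2 : ℕ) = (x'.2 : ℕ) := by
  constructor
  · rintro rfl; exact ⟨rfl, rfl⟩
  · rintro ⟨h1, h2⟩; exact sig_ext h1 h2

lemma card_edges (hl : ∀ i, 3 ≤ l i) :
    (edges (cycleSpider r l)).card = ∑ i, l i := by
  rw [edges_eq hl, Finset.card_image_of_injective _ (ed_injective hl)]
  simp [Finset.card_univ, Fintype.card_sigma]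

lemma phi_eq (hl : ∀ i, 3 ≤ l i) (v : VV r l) :
    phi (cycleSpider r l) (ff hl σ) v
      = ∑ x ∈ Finset.univ.filter (fun x => v ∈ ed hl x), lab l σ x := by
  rw [phi, edges_eq hl, Finset.filter_image,
    Finset.sum_image (fun x _ y _ h => ed_injective hl h)]
  exact Finset.sum_congr rfl (fun x _ => ff_ed σ hl x)

lemma filt_some (hl : ∀ i, 3 ≤ l i) (i : Fin r) (j : Fin (l i - 1)) :
    Finset.univ.filter (fun x => (some ⟨i, j⟩ : VV r l) ∈ ed hl x)
      = {⟨i, ⟨(j : ℕ), by have := j.2; omega⟩⟩, ⟨i, ⟨(j : ℕ) + 1, by have := j.2; omega⟩⟩} := by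
  ext x
  simp only [Finset.mem_filter, Finset.mem_univ, true_and, mem_ed_some hl,
    Finset.mem_insert, Finset.mem_singleton, sig_eq_iff]
  constructor
  · rintro ⟨rfl, h | h⟩
    · exact Or.inl ⟨rfl, h⟩
    · exact Or.inr ⟨rfl, h⟩
  · rintro (⟨rfl, h⟩ | ⟨rfl, h⟩)
    · exact ⟨rfl, Or.inl h⟩
    · exact ⟨rfl, Or.inr h⟩

lemma phi_some (hl : ∀ i, 3 ≤ l i) (i : Fin r) (j : Fin (l i - 1)) :
    phi (cycleSpider r l) (ff hl σ) (some ⟨i, j⟩)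
      = (aa l σ i + (j : ℕ)) + (aa l σ i + ((j : ℕ) + 1)) := by
  rw [phi_eq σ hl, filt_some hl i j, Finset.sum_pair]
  · rfl
  · intro hc
    rw [sig_eq_iff] at hc
    have h2 : (j : ℕ) = (j : ℕ) + 1 := hc.2
    omega

lemma filt_none (hl : ∀ i, 3 ≤ l i) :
    Finset.univ.filter (fun x => (none : VV r l) ∈ ed hl x)
      = Finset.univ.sigma (fun i => ({⟨0, by have := hl i; omega⟩,
          ⟨l i - 1, by have := hl i; omega⟩} : Finset (Fin (l i)))) := by
  ext x
  simp only [Finset.mem_filter, Finset.mem_univ, true_and, mem_ed_none hl,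
    Finset.mem_sigma, Finset.mem_insert, Finset.mem_singleton, Fin.ext_iff]

lemma phi_none (hl : ∀ i, 3 ≤ l i) :
    phi (cycleSpider r l) (ff hl σ) none
      = ∑ i, ((aa l σ i + 0) + (aa l σ i + (l i - 1))) := by
  rw [phi_eq σ hl, filt_none hl, Finset.sum_sigma]
  refine Finset.sum_congr rfl (fun i _ => ?_)
  rw [Finset.sum_pair]
  · rfl
  · intro hc
    rw [Fin.ext_iff] at hc
    have h2 : (0 : ℕ) = l i - 1 := hc
    have := hl i
    omega

lemma deg_some (hl : ∀ i, 3 ≤ l i) (i : Fin r) (j : Fin (l i - 1)) :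
    deg (cycleSpider r l) (some ⟨i, j⟩ : VV r l) = 2 := by
  rw [deg, edges_eq hl, Finset.filter_image,
    Finset.card_image_of_injective _ (ed_injective hl), filt_some hl i j,
    Finset.card_pair]
  intro hc
  rw [sig_eq_iff] at hc
  have h2 : (j : ℕ) = (j : ℕ) + 1 := hc.2
  omega

lemma deg_none (hl : ∀ i, 3 ≤ l i) :
    deg (cycleSpider r l) (none : VV r l) = 2 * r := by
  rw [deg, edges_eq hl, Finset.filter_image,
    Finset.card_image_of_injective _ (ed_injective hl), filt_none hl,
    Finset.card_sigma]
  have : ∀ i : Fin r, ({⟨0, by have := hl i; omega⟩,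
      ⟨l i - 1, by have := hl i; omega⟩} : Finset (Fin (l i))).card = 2 := by
    intro i
    rw [Finset.card_pair]
    intro hc
    rw [Fin.ext_iff] at hc
    have h2 : (0 : ℕ) = l i - 1 := hc
    have := hl i
    omega
  simp only [this, Finset.sum_const, Finset.card_univ, Fintype.card_fin, smul_eq_mul]
  ring

lemma phi_some_lt_phi_some (hl : ∀ i, 3 ≤ l i) {i i' : Fin r}
    (j : Fin (l i - 1)) (j' : Fin (l i' - 1)) (h : σ i < σ i') :
    phi (cycleSpider r l) (ff hl σ) (some ⟨i, j⟩)
      < phi (cycleSpider r l) (ff hl σ) (some ⟨i', j'⟩) := by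
  rw [phi_some σ hl, phi_some σ hl]
  have k1 : (j : ℕ) + 1 < LL l σ (σ i) := by
    rw [LL_sigma σ hl]
    have := j.2
    have := hl i
    omega
  have k2 := bb_le (l := l) σ h
  have k3 : aa l σ i = bb l σ (σ i) := rfl
  have k4 : aa l σ i' = bb l σ (σ i') := rfl
  omega

lemma phi_some_lt_phi_none (hl : ∀ i, 3 ≤ l i) (hr : 3 ≤ r)
    (hσ : l (σ.symm ⟨r - 1, by omega⟩) ≤ l (σ.symm ⟨0, by omega⟩))
    (i : Fin r) (j : Fin (l i - 1)) :
    phi (cycleSpider r l) (ff hl σ) (some ⟨i, j⟩)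
      < phi (cycleSpider r l) (ff hl σ) none := by
  have hr0 : 0 < r := by omega
  set z : Fin r := ⟨0, hr0⟩ with hz
  set w : Fin r := ⟨r - 1, by omega⟩ with hw
  rw [phi_some σ hl, phi_none σ hl]
  have hre : ∑ i, ((aa l σ i + 0) + (aa l σ i + (l i - 1)))
      = ∑ p, ((bb l σ p + 0) + (bb l σ p + (LL l σ p - 1))) := by
    rw [← Equiv.sum_comp σ (fun p => (bb l σ p + 0) + (bb l σ p + (LL l σ p - 1)))]
    exact Finset.sum_congr rfl (fun i _ => by rw [LL_sigma σ hl]; rfl)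
  rw [hre]
  have hzw : z ≠ w := by
    rw [hz, hw, Ne, Fin.ext_iff]
    show ¬((0 : ℕ) = r - 1)
    omega
  have hsum : ((bb l σ z + 0) + (bb l σ z + (LL l σ z - 1)))
        + ((bb l σ w + 0) + (bb l σ w + (LL l σ w - 1)))
      ≤ ∑ p, ((bb l σ p + 0) + (bb l σ p + (LL l σ p - 1))) := by
    have hss := Finset.sum_le_sum_of_subset
      (f := fun p => (bb l σ p + 0) + (bb l σ p + (LL l σ p - 1)))
      (Finset.subset_univ ({z, w} : Finset (Fin r)))
    rwa [Finset.sum_pair hzw] at hss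
  have e1 : bb l σ z = 1 := bb_zero (l := l) σ hr0
  have e2 : bb l σ w + LL l σ w = 1 + ∑ i, l i := bb_last (l := l) σ hr0
  have e3 : 3 ≤ LL l σ w := hl _
  have e4 : LL l σ w ≤ LL l σ z := hσ
  have h1 : aa l σ i + ((j : ℕ) + 1) ≤ ∑ i, l i :=
    lab_le_m σ hl ⟨i, ⟨(j : ℕ) + 1, by have := j.2; omega⟩⟩
  omega

end CycleSpiderAux

open CycleSpiderAux in
/-- every cycle spider (at least three cycles, each of length at least 3,
pairwise meeting exactly in the common center) is strongly antimagic. -/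
theorem stmt_17 (r : ℕ) (hr : 3 ≤ r) (l : Fin r → ℕ) (hl : ∀ i : Fin r, 3 ≤ l i) :
    IsStronglyAntimagic (cycleSpider r l) := by
  have hr0 : 0 < r := by omega
  have : Nonempty (Fin r) := ⟨⟨0, hr0⟩⟩
  obtain ⟨i₀, hmax⟩ := Finite.exists_max l
  set σ : Equiv.Perm (Fin r) := Equiv.swap ⟨0, hr0⟩ i₀ with hσdef
  have hσz : σ.symm ⟨0, hr0⟩ = i₀ := by
    rw [hσdef, Equiv.symm_swap, Equiv.swap_apply_left]
  have hσ : l (σ.symm ⟨r - 1, by omega⟩) ≤ l (σ.symm ⟨0, by omega⟩) := by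
    rw [hσz]
    exact hmax _
  refine ⟨ff hl σ, ⟨?_, ?_, ?_⟩, ?_, ?_⟩
  · -- MapsTo
    intro e he
    rw [Finset.mem_coe, edges_eq hl, Finset.mem_image] at he
    obtain ⟨x, -, rfl⟩ := he
    rw [ff_ed σ hl x]
    rw [Set.mem_Icc, card_edges hl]
    exact ⟨lab_pos (l := l) σ x, lab_le_m σ hl x⟩
  · -- InjOn
    intro e he e' he' hfe
    rw [Finset.mem_coe, edges_eq hl, Finset.mem_image] at he he'
    obtain ⟨x, -, rfl⟩ := he
    obtain ⟨x', -, rfl⟩ := he'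
    rw [ff_ed σ hl x, ff_ed σ hl x'] at hfe
    rw [lab_injective σ hl hfe]
  · -- SurjOn
    intro y hy
    rw [Set.mem_Icc, card_edges hl] at hy
    have hy2 : y ∈ Finset.Icc 1 (∑ i, l i) := Finset.mem_Icc.mpr hy
    rw [← image_lab σ hl, Finset.mem_image] at hy2
    obtain ⟨x, -, rfl⟩ := hy2
    refine ⟨ed hl x, ?_, ff_ed σ hl x⟩
    rw [Finset.mem_coe, edges_eq hl, Finset.mem_image]
    exact ⟨x, Finset.mem_univ x, rfl⟩
  · -- distinct vertex sums
    rintro (_ | ⟨i, j⟩) (_ | ⟨i', j'⟩) huv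
    · exact absurd rfl huv
    · exact Nat.ne_of_gt (phi_some_lt_phi_none σ hl hr hσ i' j')
    · exact Nat.ne_of_lt (phi_some_lt_phi_none σ hl hr hσ i j)
    · rcases lt_trichotomy (σ i) (σ i') with hlt | heq | hlt
      · exact Nat.ne_of_lt (phi_some_lt_phi_some σ hl j j' hlt)
      · have h1 : i = i' := σ.injective heq
        subst h1
        have hjj : (j : ℕ) ≠ (j' : ℕ) := by
          intro hc
          exact huv (by rw [some_eq_some.mpr ⟨rfl, hc⟩])
        rw [phi_some σ hl, phi_some σ hl]
        omega
      · exact Nat.ne_of_gt (phi_some_lt_phi_some σ hl j' j hlt)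
  · -- degree condition
    rintro (_ | ⟨i, j⟩) (_ | ⟨i', j'⟩) hdeg
    · exact absurd hdeg (lt_irrefl _)
    · exact phi_some_lt_phi_none σ hl hr hσ i' j'
    · rw [deg_none hl, deg_some hl] at hdeg
      omega
    · rw [deg_some hl, deg_some hl] at hdeg
      exact absurd hdeg (lt_irrefl _)
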